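/- Let μ be a discrete measure on a finite set X with positive masses λ_i, let {ψ_1,...,ψ_N} be a μ-orthonormal basis of S|_X, V the matrix with entries V_{ik} = ψ_k(x_i), b = V^t λ the vector of μ-moments, and u ≥ 0 a vector with ‖V^t u − b‖_2 = ε. Let (T, w) be the quadrature formula given by the nonzero entries of u. Then for every φ ∈ S, |∑_i λ_i φ(x_i) − ∑_j w_j φ(t_j)| ≤ ε · ‖φ‖_{ℓ²_λ(X)}, where ‖φ‖²_{ℓ²_λ(X)} = ∑_i λ_i φ(x_i)². -/
import Mathlib


/-- Near-exactness on the space `S`: if `u ≥ 0` has moment residual `ε` with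
respect to a `μ`-orthonormal basis `ψ` of `S|_X`, then the quadrature error on
every `φ ∈ S = span ψ` is at most `ε ‖φ‖_{ℓ²_λ(X)}`. -/
theorem quadrature_error_residual
    (M N : ℕ) (lam : Fin M → ℝ) (hlam : ∀ i, 0 < lam i)
    (ψ : Fin N → (Fin M → ℝ))
    (horth : ∀ j k, ∑ i, lam i * ψ j i * ψ k i = if j = k then 1 else 0)
    (u : Fin M → ℝ) (hu : ∀ i, 0 ≤ u i) (ε : ℝ)
    (hres : Real.sqrt (∑ k, (∑ i, u i * ψ k i - ∑ i, lam i * ψ k i) ^ 2) = ε) :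
    ∀ φ ∈ Submodule.span ℝ (Set.range ψ),
      |∑ i, lam i * φ i - ∑ i, u i * φ i|
        ≤ ε * Real.sqrt (∑ i, lam i * φ i ^ 2) := by
  intro φ hφmem
  obtain ⟨γ, hγ⟩ := (Submodule.mem_span_range_iff_exists_fun ℝ).mp hφmem
  have hφ : ∀ i, φ i = ∑ k, γ k * ψ k i := by
    intro i
    rw [← hγ]
    simp [Finset.sum_apply]
  -- rewrite sums in terms of γ
  have h1 : ∑ i, lam i * φ i = ∑ k, γ k * ∑ i, lam i * ψ k i := by
    simp_rw [hφ, Finset.mul_sum]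
    rw [Finset.sum_comm]
    refine Finset.sum_congr rfl fun k _ => ?_
    refine Finset.sum_congr rfl fun i _ => by ring
  have h2 : ∑ i, u i * φ i = ∑ k, γ k * ∑ i, u i * ψ k i := by
    simp_rw [hφ, Finset.mul_sum]
    rw [Finset.sum_comm]
    refine Finset.sum_congr rfl fun k _ => ?_
    refine Finset.sum_congr rfl fun i _ => by ring
  have hn : ∑ i, lam i * φ i ^ 2 = ∑ k, γ k ^ 2 := by
    have : ∀ i, lam i * φ i ^ 2 = ∑ k, ∑ l, γ k * γ l * (lam i * ψ k i * ψ l i) := by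
      intro i
      rw [hφ i, sq, Finset.sum_mul_sum, Finset.mul_sum]
      refine Finset.sum_congr rfl fun k _ => ?_
      rw [Finset.mul_sum]
      refine Finset.sum_congr rfl fun l _ => by ring
    simp_rw [this]
    rw [Finset.sum_comm]
    refine Finset.sum_congr rfl fun k _ => ?_
    rw [Finset.sum_comm]
    have : ∀ l, ∑ i, γ k * γ l * (lam i * ψ k i * ψ l i)
        = γ k * γ l * (if k = l then (1:ℝ) else 0) := by
      intro l
      rw [← horth k l, Finset.mul_sum]
    simp_rw [this]
    simp [mul_ite, sq]
  have hdiff : ∑ i, lam i * φ i - ∑ i, u i * φ i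
      = ∑ k, γ k * (∑ i, lam i * ψ k i - ∑ i, u i * ψ k i) := by
    rw [h1, h2, ← Finset.sum_sub_distrib]
    refine Finset.sum_congr rfl fun k _ => by ring
  have hε : 0 ≤ ε := hres ▸ Real.sqrt_nonneg _
  have hcs' : |∑ k, γ k * (∑ i, lam i * ψ k i - ∑ i, u i * ψ k i)|
      ≤ Real.sqrt (∑ k, γ k ^ 2) *
        Real.sqrt (∑ k, (∑ i, lam i * ψ k i - ∑ i, u i * ψ k i) ^ 2) := by
    have hsq := Finset.sum_mul_sq_le_sq_mul_sq Finset.univ γ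
        (fun k => ∑ i, lam i * ψ k i - ∑ i, u i * ψ k i)
    calc |∑ k, γ k * (∑ i, lam i * ψ k i - ∑ i, u i * ψ k i)|
        = Real.sqrt ((∑ k, γ k * (∑ i, lam i * ψ k i - ∑ i, u i * ψ k i)) ^ 2) := by
          rw [Real.sqrt_sq_eq_abs]
      _ ≤ Real.sqrt ((∑ k, γ k ^ 2) *
            ∑ k, (∑ i, lam i * ψ k i - ∑ i, u i * ψ k i) ^ 2) :=
          Real.sqrt_le_sqrt hsq
      _ = _ := Real.sqrt_mul (by positivity) _
  have hflip : (∑ k, (∑ i, lam i * ψ k i - ∑ i, u i * ψ k i) ^ 2)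
      = ∑ k, (∑ i, u i * ψ k i - ∑ i, lam i * ψ k i) ^ 2 := by
    refine Finset.sum_congr rfl fun k _ => by ring
  rw [hdiff]
  calc |∑ k, γ k * (∑ i, lam i * ψ k i - ∑ i, u i * ψ k i)|
      ≤ Real.sqrt (∑ k, γ k ^ 2) *
        Real.sqrt (∑ k, (∑ i, lam i * ψ k i - ∑ i, u i * ψ k i) ^ 2) := hcs'
    _ = ε * Real.sqrt (∑ i, lam i * φ i ^ 2) := by
        rw [hflip, hres, hn, mul_comm]
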